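/- Let ℓ₁,…,ℓₙ : ℝ^d → ℝ (n ≥ 2) be differentiable, L-Lipschitz functions with ‖∇ℓⱼ(w)‖ ≤ L for all w and all j. Define f_S = (1/n)·Σ_{j=1}^n ℓⱼ and, for a fixed i, f_{S^i} = (1/(n−1))·Σ_{j≠i} ℓⱼ; suppose both attain their infima, both satisfy the PL condition with parameter μ > 0, and both satisfy the error bound with parameter μ: for every x there is a global minimizer x_p of the function with ‖∇f(x)‖ ≥ μ·‖x − x_p‖. Let w₁, w₂ ∈ ℝ^d satisfy ‖∇f_S(w₁)‖ ≤ ε and ‖∇f_{S^i}(w₂)‖ ≤ ε, and let w₁* be a global minimizer of f_S closest to w₁ and w₂* a global minimizer of f_{S^i} closest to w₂. Then |ℓᵢ(w₁) − ℓᵢ(w₂)| ≤ 2Lε/μ + L²/(μn) + L²/(μ(n−1)). -/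

import Mathlib

open Finset

section Helpers
variable {F : Type*} [NormedAddCommGroup F] [InnerProductSpace ℝ F] [CompleteSpace F]

lemma norm_gradient_eq' (f : F → ℝ) (x : F) : ‖gradient f x‖ = ‖fderiv ℝ f x‖ :=
  (InnerProductSpace.toDual ℝ F).symm.norm_map _

omit [CompleteSpace F] in
lemma fderiv_eq_zero_of_min' (f : F → ℝ) (a : F) (h : ∀ y, f a ≤ f y) :
    fderiv ℝ f a = 0 :=
  IsLocalMin.fderiv_eq_zero (Filter.Eventually.of_forall h)

end Helpers

set_option maxHeartbeats 1600000 in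
theorem pl_pointwise_stability_case3 (d n : ℕ) (hn : 2 ≤ n) (i : Fin n) (L μ ε : ℝ)
    (ℓ : Fin n → EuclideanSpace ℝ (Fin d) → ℝ)
    (hdiff : ∀ j, Differentiable ℝ (ℓ j))
    (hlip : ∀ j x y, |ℓ j x - ℓ j y| ≤ L * ‖x - y‖)
    (hgrad : ∀ j w, ‖gradient (ℓ j) w‖ ≤ L)
    (hμ : 0 < μ)
    (fS fSi : EuclideanSpace ℝ (Fin d) → ℝ)
    (hfS : fS = fun w => (1 / (n : ℝ)) * ∑ j, ℓ j w)
    (hfSi : fSi = fun w => (1 / ((n : ℝ) - 1)) * ∑ j ∈ univ.erase i, ℓ j w)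
    (w₁s w₂s : EuclideanSpace ℝ (Fin d))
    (hw₁s : ∀ y, fS w₁s ≤ fS y)
    (hw₂s : ∀ y, fSi w₂s ≤ fSi y)
    (hPLS : ∀ x, μ * (fS x - fS w₁s) ≤ ‖gradient fS x‖ ^ 2)
    (hPLSi : ∀ x, μ * (fSi x - fSi w₂s) ≤ ‖gradient fSi x‖ ^ 2)
    (hEBS : ∀ x, ∃ xp, (∀ y, fS xp ≤ fS y) ∧ μ * ‖x - xp‖ ≤ ‖gradient fS x‖)
    (hEBSi : ∀ x, ∃ xp, (∀ y, fSi xp ≤ fSi y) ∧ μ * ‖x - xp‖ ≤ ‖gradient fSi x‖)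
    (w₁ w₂ : EuclideanSpace ℝ (Fin d))
    (hgw₁ : ‖gradient fS w₁‖ ≤ ε)
    (hgw₂ : ‖gradient fSi w₂‖ ≤ ε)
    (hclosest₁ : ∀ v, (∀ y, fS v ≤ fS y) → ‖w₁ - w₁s‖ ≤ ‖w₁ - v‖)
    (hclosest₂ : ∀ v, (∀ y, fSi v ≤ fSi y) → ‖w₂ - w₂s‖ ≤ ‖w₂ - v‖) :
    |ℓ i w₁ - ℓ i w₂| ≤ 2 * L * ε / μ + L ^ 2 / (μ * n) + L ^ 2 / (μ * ((n : ℝ) - 1)) := by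
  have hn2 : (2 : ℝ) ≤ (n : ℝ) := by exact_mod_cast hn
  have hnpos : (0 : ℝ) < n := by linarith
  have hn1pos : (0 : ℝ) < (n : ℝ) - 1 := by linarith
  have hne : (n : ℝ) ≠ 0 := ne_of_gt hnpos
  have hne1 : (n : ℝ) - 1 ≠ 0 := ne_of_gt hn1pos
  have hL : 0 ≤ L := le_trans (norm_nonneg _) (hgrad i w₁)
  have hε : 0 ≤ ε := le_trans (norm_nonneg _) hgw₁
  -- differentiability
  have hdfS : Differentiable ℝ fS := by
    rw [hfS]; exact Differentiable.const_mul (Differentiable.fun_sum fun j _ => hdiff j) _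
  have hdfSi : Differentiable ℝ fSi := by
    rw [hfSi]; exact Differentiable.const_mul (Differentiable.fun_sum fun j _ => hdiff j) _
  -- combination identity
  have hcomb : ∀ x, (n : ℝ) * fS x = ((n : ℝ) - 1) * fSi x + ℓ i x := by
    intro x
    simp only [hfS, hfSi]
    rw [show (n : ℝ) * (1 / (n : ℝ) * ∑ j, ℓ j x) = ∑ j, ℓ j x by field_simp,
      show ((n : ℝ) - 1) * (1 / ((n : ℝ) - 1) * ∑ j ∈ univ.erase i, ℓ j x)
        = ∑ j ∈ univ.erase i, ℓ j x by field_simp]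
    exact (Finset.sum_erase_add _ _ (mem_univ i)).symm
  -- distance bounds
  have hd1 : ‖w₁ - w₁s‖ ≤ ε / μ := by
    obtain ⟨xp, hxp, hxpb⟩ := hEBS w₁
    have h1 := hclosest₁ xp hxp
    rw [le_div_iff₀ hμ]
    have h2 := mul_le_mul_of_nonneg_left h1 hμ.le
    linarith
  have hd2 : ‖w₂ - w₂s‖ ≤ ε / μ := by
    obtain ⟨xp, hxp, hxpb⟩ := hEBSi w₂
    have h1 := hclosest₂ xp hxp
    rw [le_div_iff₀ hμ]
    have h2 := mul_le_mul_of_nonneg_left h1 hμ.le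
    linarith
  -- gradients vanish at minimizers
  have hz1 : fderiv ℝ fS w₁s = 0 := fderiv_eq_zero_of_min' fS w₁s hw₁s
  have hz2 : fderiv ℝ fSi w₂s = 0 := fderiv_eq_zero_of_min' fSi w₂s hw₂s
  -- fderiv combination identity
  have hfd : ∀ x, (n : ℝ) • fderiv ℝ fS x = ((n : ℝ) - 1) • fderiv ℝ fSi x + fderiv ℝ (ℓ i) x := by
    intro x
    have he : (fun x => (n : ℝ) * fS x) = fun x => ((n : ℝ) - 1) * fSi x + ℓ i x :=
      funext hcomb
    have h1 : fderiv ℝ (fun x => (n : ℝ) * fS x) x = (n : ℝ) • fderiv ℝ fS x :=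
      fderiv_const_mul (hdfS x) _
    have h2 : fderiv ℝ (fun x => ((n : ℝ) - 1) * fSi x + ℓ i x) x
        = ((n : ℝ) - 1) • fderiv ℝ fSi x + fderiv ℝ (ℓ i) x := by
      rw [fderiv_fun_add ((hdfSi x).const_mul _) (hdiff i x), fderiv_const_mul (hdfSi x)]
    rw [← h1, ← h2, he]
  -- gradient norm bounds at the cross minimizers
  have hgi : ∀ x, ‖fderiv ℝ (ℓ i) x‖ ≤ L := fun x => by
    rw [← norm_gradient_eq']; exact hgrad i x
  have hb2 : ‖gradient fS w₂s‖ ≤ L / n := by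
    rw [norm_gradient_eq']
    have h0 := hfd w₂s
    rw [hz2, smul_zero, zero_add] at h0
    have hnorm : (n : ℝ) * ‖fderiv ℝ fS w₂s‖ = ‖fderiv ℝ (ℓ i) w₂s‖ := by
      rw [← h0, norm_smul, Real.norm_eq_abs, abs_of_pos hnpos]
    rw [le_div_iff₀ hnpos]
    calc ‖fderiv ℝ fS w₂s‖ * n = (n : ℝ) * ‖fderiv ℝ fS w₂s‖ := by ring
      _ = ‖fderiv ℝ (ℓ i) w₂s‖ := hnorm
      _ ≤ L := hgi w₂s
  have hb1 : ‖gradient fSi w₁s‖ ≤ L / ((n : ℝ) - 1) := by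
    rw [norm_gradient_eq']
    have h0 := hfd w₁s
    rw [hz1, smul_zero] at h0
    have heq : ((n : ℝ) - 1) • fderiv ℝ fSi w₁s = -fderiv ℝ (ℓ i) w₁s := by
      linear_combination (norm := module) -h0
    have hnorm : ((n : ℝ) - 1) * ‖fderiv ℝ fSi w₁s‖ = ‖fderiv ℝ (ℓ i) w₁s‖ := by
      rw [← norm_neg (fderiv ℝ (ℓ i) w₁s), ← heq, norm_smul, Real.norm_eq_abs,
        abs_of_pos hn1pos]
    rw [le_div_iff₀ hn1pos]
    calc ‖fderiv ℝ fSi w₁s‖ * ((n : ℝ) - 1) = ((n : ℝ) - 1) * ‖fderiv ℝ fSi w₁s‖ := by ring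
      _ = ‖fderiv ℝ (ℓ i) w₁s‖ := hnorm
      _ ≤ L := hgi w₁s
  -- PL bounds on function value gaps (multiplicative form)
  have hsqS : ‖gradient fS w₂s‖ ^ 2 * (n : ℝ) ^ 2 ≤ L ^ 2 := by
    have h1 := mul_le_mul_of_nonneg_right
      (pow_le_pow_left₀ (norm_nonneg _) hb2 2) (sq_nonneg ((n : ℝ)))
    have h2 : (L / (n : ℝ)) ^ 2 * (n : ℝ) ^ 2 = L ^ 2 := by field_simp
    rw [h2] at h1
    exact h1
  have hsqSi : ‖gradient fSi w₁s‖ ^ 2 * ((n : ℝ) - 1) ^ 2 ≤ L ^ 2 := by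
    have h1 := mul_le_mul_of_nonneg_right
      (pow_le_pow_left₀ (norm_nonneg _) hb1 2) (sq_nonneg ((n : ℝ) - 1))
    have h2 : (L / ((n : ℝ) - 1)) ^ 2 * ((n : ℝ) - 1) ^ 2 = L ^ 2 := by field_simp
    rw [h2] at h1
    exact h1
  have hv1m : (fS w₂s - fS w₁s) * (μ * (n : ℝ) ^ 2) ≤ L ^ 2 := by
    have h3 := mul_le_mul_of_nonneg_right (hPLS w₂s) (sq_nonneg ((n : ℝ)))
    linarith
  have hv2m : (fSi w₁s - fSi w₂s) * (μ * ((n : ℝ) - 1) ^ 2) ≤ L ^ 2 := by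
    have h3 := mul_le_mul_of_nonneg_right (hPLSi w₁s) (sq_nonneg ((n : ℝ) - 1))
    linarith
  -- nonnegativity of the gaps
  have hv1' : 0 ≤ fS w₂s - fS w₁s := by linarith [hw₁s w₂s]
  have hv2' : 0 ≤ fSi w₁s - fSi w₂s := by linarith [hw₂s w₁s]
  -- bound on |ℓ i w₁s - ℓ i w₂s|
  have hmid : |ℓ i w₁s - ℓ i w₂s| ≤ L ^ 2 / (μ * n) + L ^ 2 / (μ * ((n : ℝ) - 1)) := by
    have e1 := hcomb w₁s
    have e2 := hcomb w₂s
    have t1 : (n : ℝ) * (fS w₂s - fS w₁s) ≤ L ^ 2 / (μ * n) := by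
      rw [le_div_iff₀ (by positivity)]
      nlinarith [hv1m]
    have t2 : ((n : ℝ) - 1) * (fSi w₁s - fSi w₂s) ≤ L ^ 2 / (μ * ((n : ℝ) - 1)) := by
      rw [le_div_iff₀ (by positivity)]
      nlinarith [hv2m]
    have hg1 : 0 ≤ (n : ℝ) * (fS w₂s - fS w₁s) := mul_nonneg hnpos.le hv1'
    have hg2 : 0 ≤ ((n : ℝ) - 1) * (fSi w₁s - fSi w₂s) := mul_nonneg hn1pos.le hv2'
    rw [abs_le]
    constructor
    · linarith
    · linarith
  -- endpoints
  have hend1 : |ℓ i w₁ - ℓ i w₁s| ≤ L * (ε / μ) :=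
    le_trans (hlip i w₁ w₁s) (mul_le_mul_of_nonneg_left hd1 hL)
  have hend2 : |ℓ i w₂s - ℓ i w₂| ≤ L * (ε / μ) := by
    have h1 := hlip i w₂s w₂
    rw [norm_sub_rev] at h1
    exact le_trans h1 (mul_le_mul_of_nonneg_left hd2 hL)
  have tri1 := abs_sub_le (ℓ i w₁) (ℓ i w₁s) (ℓ i w₂)
  have tri2 := abs_sub_le (ℓ i w₁s) (ℓ i w₂s) (ℓ i w₂)
  have hfin : 2 * L * ε / μ = L * (ε / μ) + L * (ε / μ) := by field_simp; ring
  linarith
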